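/- arXiv:0901.4238 — 2 statements merged into one kernel-verified Lean document; each statement's English description precedes it below -/
import Mathlib

section
/- Let X be a complete normed space (Banach space), let C > 0, κ > 0, and let r ≥ 3 be a real number. Set δ = κ / r². Then there exists μ ∈ (0,1), depending only on C and r, with the following property: for every T with 0 < T ≤ 1 and T^δ ≤ μ, setting λ = μ T^{−δ} (so that λ ≥ 1), every map K : X → X satisfying (i) ‖K(v)‖ ≤ C T^κ ( λ^r + ‖v‖^r ) for all v ∈ X with ‖v‖ ≤ 2Cλ^r, and (ii) ‖K(v₁) − K(v₂)‖ ≤ C T^κ ‖v₁ − v₂‖ ( λ^{r−1} + ‖v₁‖^{r−1} + ‖v₂‖^{r−1} ) for all v₁, v₂ ∈ X with ‖v₁‖, ‖v₂‖ ≤ 2Cλ^r, maps the closed ball B = { v ∈ X : ‖v‖ ≤ 2Cλ^r } into itself, is a contraction on B (with Lipschitz constant at most 1/2), and hence has a unique fixed point in B. -/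
set_option maxHeartbeats 1000000

/-- Deterministic fixed-point core of the proof of Proposition 2.4. -/
theorem stmt_6 (X : Type*) [NormedAddCommGroup X] [NormedSpace ℝ X] [CompleteSpace X]
    (C κ r : ℝ) (hC : 0 < C) (hκ : 0 < κ) (hr : 3 ≤ r) :
    ∃ μ : ℝ, 0 < μ ∧ μ < 1 ∧
    ∀ T : ℝ, 0 < T → T ≤ 1 → T ^ (κ / r ^ 2) ≤ μ →
    ∀ lam : ℝ, lam = μ * T ^ (-(κ / r ^ 2)) →
      1 ≤ lam ∧
      ∀ K : X → X,
        (∀ v : X, ‖v‖ ≤ 2 * C * lam ^ r →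
          ‖K v‖ ≤ C * T ^ κ * (lam ^ r + ‖v‖ ^ r)) →
        (∀ v₁ v₂ : X, ‖v₁‖ ≤ 2 * C * lam ^ r → ‖v₂‖ ≤ 2 * C * lam ^ r →
          ‖K v₁ - K v₂‖ ≤ C * T ^ κ * ‖v₁ - v₂‖ *
            (lam ^ (r - 1) + ‖v₁‖ ^ (r - 1) + ‖v₂‖ ^ (r - 1))) →
        (∀ v ∈ Metric.closedBall (0 : X) (2 * C * lam ^ r),
            K v ∈ Metric.closedBall (0 : X) (2 * C * lam ^ r)) ∧
        (∀ v₁ ∈ Metric.closedBall (0 : X) (2 * C * lam ^ r),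
          ∀ v₂ ∈ Metric.closedBall (0 : X) (2 * C * lam ^ r),
            ‖K v₁ - K v₂‖ ≤ (1 / 2) * ‖v₁ - v₂‖) ∧
        (∃! v, v ∈ Metric.closedBall (0 : X) (2 * C * lam ^ r) ∧ K v = v) := by
  have h2C : (0:ℝ) < 2 * C := by linarith
  set A : ℝ := (1 + (2*C) ^ r) + C * (1 + 2 * (2*C) ^ (r-1)) with hAdef
  have hApos : 0 < A := by positivity
  refine ⟨min (1/2) (1/(2*A)), by positivity,
    lt_of_le_of_lt (min_le_left _ _) (by norm_num), ?_⟩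
  set μ : ℝ := min (1/2) (1/(2*A)) with hμdef
  have hμpos : 0 < μ := by positivity
  have hμhalf : μ ≤ 1/2 := min_le_left _ _
  have hμA : μ ≤ 1/(2*A) := min_le_right _ _
  have hAμ : A * μ ≤ 1/2 := by
    rw [le_div_iff₀ (by positivity : (0:ℝ) < 2*A)] at hμA
    nlinarith
  intro T hT hT1 hTμ lam hlam
  have hr0 : (0:ℝ) < r := by linarith
  have hTδ : 0 < T ^ (κ / r ^ 2) := Real.rpow_pos_of_pos hT _
  have hTκ : 0 < T ^ κ := Real.rpow_pos_of_pos hT _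
  have hlam' : lam = μ / T ^ (κ / r ^ 2) := by
    rw [hlam, Real.rpow_neg hT.le]; ring
  have hlam1 : 1 ≤ lam := by
    rw [hlam', le_div_iff₀ hTδ, one_mul]; exact hTμ
  have hlampos : 0 < lam := lt_of_lt_of_le one_pos hlam1
  refine ⟨hlam1, ?_⟩
  -- key identity : T^κ * lam^(r^2) = μ^(r^2)
  have hTT : (T ^ (κ / r ^ 2)) ^ (r ^ 2) = T ^ κ := by
    rw [← Real.rpow_mul hT.le]
    congr 1
    field_simp
  have hkey : T ^ κ * lam ^ (r ^ 2) = μ ^ (r ^ 2) := by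
    rw [hlam', Real.div_rpow hμpos.le hTδ.le, hTT, mul_comm,
      div_mul_cancel₀ _ (ne_of_gt hTκ)]
  set P : ℝ := μ ^ (r ^ 2) with hPdef
  have hPpos : 0 < P := Real.rpow_pos_of_pos hμpos _
  have hbound : ∀ a : ℝ, a ≤ r ^ 2 → T ^ κ * lam ^ a ≤ P := by
    intro a ha
    rw [← hkey]
    exact mul_le_mul_of_nonneg_left
      (Real.rpow_le_rpow_of_exponent_le hlam1 ha) hTκ.le
  have hPμ : P ≤ μ := by
    have := Real.rpow_le_rpow_of_exponent_ge hμpos (by linarith : μ ≤ 1)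
      (by nlinarith : (1:ℝ) ≤ r ^ 2)
    rwa [Real.rpow_one] at this
  have hlamr1 : (1:ℝ) ≤ lam ^ r := by
    have := Real.rpow_le_rpow_of_exponent_le hlam1 hr0.le
    rwa [Real.rpow_zero] at this
  set R : ℝ := 2 * C * lam ^ r with hRdef
  have hRpos : 0 < R := by
    have : (0:ℝ) < lam ^ r := Real.rpow_pos_of_pos hlampos r
    positivity
  intro K hK1 hK2
  -- bounds used repeatedly
  have f1 : T ^ κ * lam ^ r ≤ P := hbound r (by nlinarith)
  have hRr : R ^ r = (2*C) ^ r * lam ^ (r*r) := by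
    rw [hRdef, Real.mul_rpow h2C.le (Real.rpow_pos_of_pos hlampos r).le,
      ← Real.rpow_mul hlampos.le]
  have f2 : T ^ κ * R ^ r ≤ (2*C) ^ r * P := by
    rw [hRr]
    have := hbound (r*r) (by nlinarith)
    calc T ^ κ * ((2*C) ^ r * lam ^ (r*r)) = (2*C) ^ r * (T ^ κ * lam ^ (r*r)) := by ring
      _ ≤ (2*C) ^ r * P := by
          apply mul_le_mul_of_nonneg_left this
          positivity
  have g1 : T ^ κ * lam ^ (r-1) ≤ P := hbound (r-1) (by nlinarith)
  have hRr1 : R ^ (r-1) = (2*C) ^ (r-1) * lam ^ (r*(r-1)) := by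
    rw [hRdef, Real.mul_rpow h2C.le (Real.rpow_pos_of_pos hlampos r).le,
      ← Real.rpow_mul hlampos.le]
  have g2 : T ^ κ * R ^ (r-1) ≤ (2*C) ^ (r-1) * P := by
    rw [hRr1]
    have := hbound (r*(r-1)) (by nlinarith)
    calc T ^ κ * ((2*C) ^ (r-1) * lam ^ (r*(r-1)))
        = (2*C) ^ (r-1) * (T ^ κ * lam ^ (r*(r-1))) := by ring
      _ ≤ (2*C) ^ (r-1) * P := by
          apply mul_le_mul_of_nonneg_left this
          positivity
  -- the ball is mapped into itself
  have hmap : ∀ v ∈ Metric.closedBall (0 : X) R, K v ∈ Metric.closedBall (0 : X) R := by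
    intro v hv
    rw [mem_closedBall_zero_iff] at hv ⊢
    have hvr : ‖v‖ ^ r ≤ R ^ r := Real.rpow_le_rpow (norm_nonneg v) hv hr0.le
    have hvT : T ^ κ * ‖v‖ ^ r ≤ (2*C) ^ r * P :=
      le_trans (mul_le_mul_of_nonneg_left hvr hTκ.le) f2
    have h2Crpos : (0:ℝ) < (2*C) ^ r := Real.rpow_pos_of_pos h2C _
    calc ‖K v‖ ≤ C * T ^ κ * (lam ^ r + ‖v‖ ^ r) := hK1 v hv
      _ = C * (T ^ κ * lam ^ r) + C * (T ^ κ * ‖v‖ ^ r) := by ring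
      _ ≤ C * P + C * ((2*C) ^ r * P) := by
          have := mul_le_mul_of_nonneg_left f1 hC.le
          have := mul_le_mul_of_nonneg_left hvT hC.le
          linarith
      _ = C * ((1 + (2*C) ^ r) * P) := by ring
      _ ≤ C * (A * μ) := by
          apply mul_le_mul_of_nonneg_left _ hC.le
          have hA1 : 1 + (2*C) ^ r ≤ A := by
            have : 0 ≤ C * (1 + 2 * (2*C) ^ (r-1)) := by positivity
            rw [hAdef]; linarith
          nlinarith
      _ ≤ C * (1/2) := by nlinarith
      _ ≤ 2 * C * 1 := by nlinarith
      _ ≤ R := by rw [hRdef]; nlinarith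
  -- contraction estimate
  have hlip : ∀ v₁ ∈ Metric.closedBall (0 : X) R, ∀ v₂ ∈ Metric.closedBall (0 : X) R,
      ‖K v₁ - K v₂‖ ≤ (1 / 2) * ‖v₁ - v₂‖ := by
    intro v₁ hv₁ v₂ hv₂
    rw [mem_closedBall_zero_iff] at hv₁ hv₂
    have hr1 : (0:ℝ) ≤ r - 1 := by linarith
    have hb1 : ‖v₁‖ ^ (r-1) ≤ R ^ (r-1) := Real.rpow_le_rpow (norm_nonneg _) hv₁ hr1
    have hb2 : ‖v₂‖ ^ (r-1) ≤ R ^ (r-1) := Real.rpow_le_rpow (norm_nonneg _) hv₂ hr1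
    have hfac : C * T ^ κ * (lam ^ (r-1) + ‖v₁‖ ^ (r-1) + ‖v₂‖ ^ (r-1)) ≤ 1/2 := by
      have t1 : T ^ κ * ‖v₁‖ ^ (r-1) ≤ (2*C) ^ (r-1) * P :=
        le_trans (mul_le_mul_of_nonneg_left hb1 hTκ.le) g2
      have t2 : T ^ κ * ‖v₂‖ ^ (r-1) ≤ (2*C) ^ (r-1) * P :=
        le_trans (mul_le_mul_of_nonneg_left hb2 hTκ.le) g2
      have hA2 : C * (1 + 2 * (2*C) ^ (r-1)) ≤ A := by
        have : (0:ℝ) ≤ 1 + (2*C) ^ r := by positivity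
        rw [hAdef]; linarith
      calc C * T ^ κ * (lam ^ (r-1) + ‖v₁‖ ^ (r-1) + ‖v₂‖ ^ (r-1))
          = C * ((T ^ κ * lam ^ (r-1)) + (T ^ κ * ‖v₁‖ ^ (r-1)) + (T ^ κ * ‖v₂‖ ^ (r-1))) := by
            ring
        _ ≤ C * (P + (2*C) ^ (r-1) * P + (2*C) ^ (r-1) * P) := by
            apply mul_le_mul_of_nonneg_left _ hC.le
            linarith
        _ = C * (1 + 2 * (2*C) ^ (r-1)) * P := by ring
        _ ≤ A * μ := by nlinarith
        _ ≤ 1/2 := hAμ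
    calc ‖K v₁ - K v₂‖
        ≤ C * T ^ κ * ‖v₁ - v₂‖ * (lam ^ (r-1) + ‖v₁‖ ^ (r-1) + ‖v₂‖ ^ (r-1)) :=
          hK2 v₁ v₂ hv₁ hv₂
      _ = (C * T ^ κ * (lam ^ (r-1) + ‖v₁‖ ^ (r-1) + ‖v₂‖ ^ (r-1))) * ‖v₁ - v₂‖ := by ring
      _ ≤ (1/2) * ‖v₁ - v₂‖ :=
          mul_le_mul_of_nonneg_right hfac (norm_nonneg _)
  refine ⟨hmap, hlip, ?_⟩
  -- Banach fixed point on the closed ball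
  set s : Set X := Metric.closedBall (0 : X) R with hs
  haveI : CompleteSpace s := (Metric.isClosed_closedBall).completeSpace_coe
  haveI : Nonempty s := ⟨⟨0, Metric.mem_closedBall_self hRpos.le⟩⟩
  set f : s → s := fun v => ⟨K v, hmap v v.2⟩ with hf
  have hlipf : LipschitzWith (1/2) f := by
    apply LipschitzWith.of_dist_le_mul
    intro x y
    have := hlip x x.2 y y.2
    simp only [Subtype.dist_eq, dist_eq_norm, hf]
    push_cast
    exact this
  have hcontr : ContractingWith (1/2) f :=
    ⟨by exact_mod_cast (by norm_num : (1:ℝ)/2 < 1), hlipf⟩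
  set v₀ : s := ContractingWith.fixedPoint f hcontr with hv₀
  have hfix : K (v₀ : X) = (v₀ : X) := by
    have := hcontr.fixedPoint_isFixedPt
    exact congrArg Subtype.val this
  refine ⟨(v₀ : X), ⟨v₀.2, hfix⟩, ?_⟩
  rintro y ⟨hy, hKy⟩
  have : Function.IsFixedPt f ⟨y, hy⟩ := Subtype.ext hKy
  exact congrArg Subtype.val (hcontr.fixedPoint_unique this)
end

section
/- Let d ≥ 1 and 0 < T ≤ 1. Let v : ℝ × ℝ^d → ℂ be continuously differentiable in the time variable and twice continuously differentiable in the space variable, and suppose that for all (s, y) ∈ [0, arctan T] × ℝ^d: i ∂_s v(s,y) + (1/2) Δ v(s,y) − (1/2)|y|² v(s,y) = 0. Define, for (t,x) ∈ [0,T] × ℝ^d, u(t,x) = (1 + t²)^{−d/4} v( arctan t, x / √(1+t²) ) exp( i |x|² t / (2(1+t²)) ). Then for all (t,x) ∈ [0,T] × ℝ^d: i ∂_t u(t,x) + (1/2) Δ u(t,x) = 0, and u(0, ·) = v(0, ·). -/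
lemma line_hasDerivAt {E F : Type*} [NormedAddCommGroup E] [NormedSpace ℝ E]
    [NormedAddCommGroup F] [NormedSpace ℝ F]
    {f : E → F} (hf : Differentiable ℝ f) (y w : E) (h : ℝ) :
    HasDerivAt (fun h : ℝ => f (y + h • w)) (fderiv ℝ f (y + h • w) w) h := by
  have hline : HasDerivAt (fun h : ℝ => y + h • w) w h := by
    simpa using ((hasDerivAt_id h).smul_const w).const_add y
  exact (hf (y + h • w)).hasFDerivAt.comp_hasDerivAt h hline

lemma line2_hasDerivAt {E : Type*} [NormedAddCommGroup E] [NormedSpace ℝ E]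
    {f : E → ℂ} (hf : ContDiff ℝ 2 f) (y w : E) :
    HasDerivAt (fun h : ℝ => fderiv ℝ f (y + h • w) w)
      (fderiv ℝ (fderiv ℝ f) y w w) 0 := by
  have hg : Differentiable ℝ (fderiv ℝ f) :=
    (hf.fderiv_right (m := 1) (by norm_num)).differentiable (by norm_num)
  have h1 := line_hasDerivAt hg y w 0
  simp only [zero_smul, add_zero] at h1
  have h2 := (ContinuousLinearMap.apply ℝ ℂ w).hasFDerivAt.comp_hasDerivAt 0 h1
  exact h2


lemma eucl_sum {d : ℕ} (x : EuclideanSpace ℝ (Fin d)) :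
    x = ∑ i : Fin d, x i • EuclideanSpace.single i (1 : ℝ) := by
  have := (EuclideanSpace.basisFun (Fin d) ℝ).sum_repr x
  simp only [EuclideanSpace.basisFun_apply, EuclideanSpace.basisFun_repr] at this
  exact this.symm

lemma norm_expand {d : ℕ} (x : EuclideanSpace ℝ (Fin d)) (i : Fin d) (h : ℝ) :
    ‖x + h • EuclideanSpace.single i (1:ℝ)‖ ^ 2
      = ‖x‖ ^ 2 + 2 * x i * h + h ^ 2 := by
  have := @norm_add_sq_real (EuclideanSpace ℝ (Fin d)) _ _ x (h • EuclideanSpace.single i (1:ℝ))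
  rw [this, real_inner_smul_right, EuclideanSpace.inner_single_right, norm_smul]
  simp [EuclideanSpace.norm_single, mul_pow]
  ring

lemma coordLaplacian_eq' {d : ℕ} {f : EuclideanSpace ℝ (Fin d) → ℂ}
    (hf : ContDiff ℝ 2 f) (y : EuclideanSpace ℝ (Fin d)) :
    (∑ i : Fin d, deriv (deriv (fun h : ℝ => f (y + h • EuclideanSpace.single i (1 : ℝ)))) 0)
      = ∑ i : Fin d,
        fderiv ℝ (fderiv ℝ f) y (EuclideanSpace.single i 1) (EuclideanSpace.single i 1) := by
  refine Finset.sum_congr rfl fun i _ => ?_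
  have hdf : Differentiable ℝ f := hf.differentiable (by norm_num)
  have h1 : deriv (fun h : ℝ => f (y + h • EuclideanSpace.single i (1:ℝ)))
      = fun h => fderiv ℝ f (y + h • EuclideanSpace.single i (1:ℝ)) (EuclideanSpace.single i 1) :=
    funext fun h => (line_hasDerivAt hdf y _ h).deriv
  rw [h1]
  exact (line2_hasDerivAt hf y _).deriv



lemma time_deriv_aux {d : ℕ} (v : ℝ → EuclideanSpace ℝ (Fin d) → ℂ)
    (hv1 : ContDiff ℝ 1 (fun p : ℝ × EuclideanSpace ℝ (Fin d) => v p.1 p.2))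
    (t : ℝ) (x : EuclideanSpace ℝ (Fin d)) :
    HasDerivAt (fun t' : ℝ =>
        (((1 + t' ^ 2) ^ (-(d : ℝ) / 4) : ℝ) : ℂ) *
          v (Real.arctan t') (((1 + t' ^ 2) ^ (-(1/2) : ℝ)) • x) *
          Complex.exp (Complex.I * ((‖x‖ ^ 2 : ℝ) : ℂ) * (t' : ℂ) / (2 * (1 + (t' : ℂ) ^ 2))))
      ((((-(d : ℝ) / 4) * (1 + t ^ 2) ^ (-(d : ℝ) / 4 - 1) * (2 * t) : ℝ) : ℂ) *
          v (Real.arctan t) (((1 + t ^ 2) ^ (-(1/2) : ℝ)) • x) * (Complex.exp (Complex.I * ((‖x‖ ^ 2 : ℝ) : ℂ) * (t : ℂ) / (2 * (1 + (t : ℂ) ^ 2))))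
        + (((1 + t ^ 2) ^ (-(d : ℝ) / 4) : ℝ) : ℂ) *
          (fderiv ℝ (fun p : ℝ × EuclideanSpace ℝ (Fin d) => v p.1 p.2)
              (Real.arctan t, ((1 + t ^ 2) ^ (-(1/2) : ℝ)) • x)
            (1 / (1 + t ^ 2), ((-(1/2) : ℝ) * (1 + t ^ 2) ^ (-(1/2) - 1 : ℝ) * (2 * t)) • x)) *
          (Complex.exp (Complex.I * ((‖x‖ ^ 2 : ℝ) : ℂ) * (t : ℂ) / (2 * (1 + (t : ℂ) ^ 2))))
        + (((1 + t ^ 2) ^ (-(d : ℝ) / 4) : ℝ) : ℂ) *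
          v (Real.arctan t) (((1 + t ^ 2) ^ (-(1/2) : ℝ)) • x) * (Complex.exp (Complex.I * ((‖x‖ ^ 2 : ℝ) : ℂ) * (t : ℂ) / (2 * (1 + (t : ℂ) ^ 2)))) *
          (Complex.I * ((‖x‖ ^ 2 : ℝ) : ℂ) * (1 - (t : ℂ) ^ 2) / (2 * (1 + (t : ℂ) ^ 2) ^ 2))) t := by
  have hc : (0:ℝ) < 1 + t ^ 2 := by positivity
  have hinner : HasDerivAt (fun t' : ℝ => 1 + t' ^ 2) (2 * t) t := by
    simpa using ((hasDerivAt_pow 2 t).const_add 1)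
  -- amplitude
  have hA : HasDerivAt (fun t' : ℝ => ((1 + t' ^ 2) ^ (-(d : ℝ) / 4) : ℝ))
      ((-(d : ℝ) / 4) * (1 + t ^ 2) ^ (-(d : ℝ) / 4 - 1) * (2 * t)) t := by
    have := hinner.rpow_const (p := -(d : ℝ) / 4) (Or.inl hc.ne')
    convert this using 1; ring
  have hAc := hA.ofReal_comp
  -- scaling factor
  have hB : HasDerivAt (fun t' : ℝ => ((1 + t' ^ 2) ^ (-(1/2) : ℝ) : ℝ))
      ((-(1/2) : ℝ) * (1 + t ^ 2) ^ (-(1/2) - 1 : ℝ) * (2 * t)) t := by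
    have := hinner.rpow_const (p := (-(1/2) : ℝ)) (Or.inl hc.ne')
    convert this using 1; ring
  have hy : HasDerivAt (fun t' : ℝ => ((1 + t' ^ 2) ^ (-(1/2) : ℝ)) • x)
      (((-(1/2) : ℝ) * (1 + t ^ 2) ^ (-(1/2) - 1 : ℝ) * (2 * t)) • x) t := hB.smul_const x
  have harc : HasDerivAt Real.arctan (1 / (1 + t ^ 2)) t := Real.hasDerivAt_arctan t
  have hγ : HasDerivAt
      (fun t' : ℝ => (Real.arctan t', ((1 + t' ^ 2) ^ (-(1/2) : ℝ)) • x))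
      ((1 / (1 + t ^ 2), ((-(1/2) : ℝ) * (1 + t ^ 2) ^ (-(1/2) - 1 : ℝ) * (2 * t)) • x)) t :=
    harc.prodMk hy
  have hF : HasFDerivAt (fun p : ℝ × EuclideanSpace ℝ (Fin d) => v p.1 p.2)
      (fderiv ℝ (fun p : ℝ × EuclideanSpace ℝ (Fin d) => v p.1 p.2)
        (Real.arctan t, ((1 + t ^ 2) ^ (-(1/2) : ℝ)) • x))
      (Real.arctan t, ((1 + t ^ 2) ^ (-(1/2) : ℝ)) • x) :=
    (hv1.differentiable (by norm_num) _).hasFDerivAt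
  have hγv : HasDerivAt (fun t' : ℝ => v (Real.arctan t') (((1 + t' ^ 2) ^ (-(1/2) : ℝ)) • x))
      (fderiv ℝ (fun p : ℝ × EuclideanSpace ℝ (Fin d) => v p.1 p.2)
          (Real.arctan t, ((1 + t ^ 2) ^ (-(1/2) : ℝ)) • x)
        (1 / (1 + t ^ 2), ((-(1/2) : ℝ) * (1 + t ^ 2) ^ (-(1/2) - 1 : ℝ) * (2 * t)) • x)) t :=
    by have := hF.comp_hasDerivAt t hγ; exact this
  -- phase
  have hofReal : HasDerivAt (fun t' : ℝ => (t' : ℂ)) 1 t := by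
    simpa using (hasDerivAt_id t).ofReal_comp
  have hN := hofReal.const_mul (Complex.I * ((‖x‖ ^ 2 : ℝ) : ℂ))
  have hD := (((hasDerivAt_pow 2 ((t : ℝ) : ℂ)).const_add (1 : ℂ)).const_mul
      (2 : ℂ)).comp_ofReal
  have hden_ne : 2 * (1 + (t : ℂ) ^ 2) ≠ 0 := by
    have h1 : (1 + (t : ℂ) ^ 2) = ((1 + t ^ 2 : ℝ) : ℂ) := by push_cast; ring
    rw [h1]
    simp only [ne_eq, mul_eq_zero, OfNat.ofNat_ne_zero, false_or]
    exact_mod_cast hc.ne'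
  have hq := hN.div hD hden_ne
  have hexp := hq.cexp
  have htotal := (hAc.mul hγv).mul hexp
  refine htotal.congr_deriv ?_
  have h2 : ((1:ℂ) + (t:ℂ)^2) ≠ 0 := by
    intro h; apply hden_ne; rw [h]; ring
  simp only [Pi.div_apply, Pi.mul_apply]
  field_simp
  ring

lemma lap_term {d : ℕ} (t : ℝ) (x : EuclideanSpace ℝ (Fin d))
    (f : EuclideanSpace ℝ (Fin d) → ℂ) (hf : ContDiff ℝ 2 f) (i : Fin d) :
    deriv (deriv (fun h : ℝ =>
      (((1 + t ^ 2) ^ (-(d : ℝ) / 4) : ℝ) : ℂ) * f (((1 + t ^ 2) ^ (-(1/2) : ℝ)) • (x + h • EuclideanSpace.single i (1 : ℝ))) *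
        Complex.exp (Complex.I * ((‖x + h • EuclideanSpace.single i (1 : ℝ)‖ ^ 2 : ℝ) : ℂ) * (t : ℂ) / (2 * (1 + (t : ℂ) ^ 2))))) 0
    = (((1 + t ^ 2) ^ (-(d : ℝ) / 4) : ℝ) : ℂ) *
        Complex.exp (Complex.I * ((‖x‖ ^ 2 : ℝ) : ℂ) * (t : ℂ) / (2 * (1 + (t : ℂ) ^ 2))) *
      ( ((((1 + t ^ 2) ^ (-(1/2) : ℝ)) * ((1 + t ^ 2) ^ (-(1/2) : ℝ)) : ℝ) : ℂ) * fderiv ℝ (fderiv ℝ f) (((1 + t ^ 2) ^ (-(1/2) : ℝ)) • x) (EuclideanSpace.single i (1 : ℝ)) (EuclideanSpace.single i (1 : ℝ))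
        + 2 * (Complex.I * ((2 * x i : ℝ) : ℂ) * (t : ℂ) / (2 * (1 + (t : ℂ) ^ 2))) * ((((1 + t ^ 2) ^ (-(1/2) : ℝ)) : ℝ) : ℂ) *
            fderiv ℝ f (((1 + t ^ 2) ^ (-(1/2) : ℝ)) • x) (EuclideanSpace.single i (1 : ℝ))
        + f (((1 + t ^ 2) ^ (-(1/2) : ℝ)) • x) * ( Complex.I * (((2:ℝ)) : ℂ) * (t : ℂ) / (2 * (1 + (t : ℂ) ^ 2))
              + (Complex.I * ((2 * x i : ℝ) : ℂ) * (t : ℂ) / (2 * (1 + (t : ℂ) ^ 2))) ^ 2 ) ) := by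
  have hdf : Differentiable ℝ f := hf.differentiable (by norm_num)
  have hfun : (fun h : ℝ =>
      (((1 + t ^ 2) ^ (-(d : ℝ) / 4) : ℝ) : ℂ) * f (((1 + t ^ 2) ^ (-(1/2) : ℝ)) • (x + h • EuclideanSpace.single i (1 : ℝ))) *
        Complex.exp (Complex.I * ((‖x + h • EuclideanSpace.single i (1 : ℝ)‖ ^ 2 : ℝ) : ℂ) * (t : ℂ) / (2 * (1 + (t : ℂ) ^ 2))))
      = (fun h : ℝ => (((1 + t ^ 2) ^ (-(d : ℝ) / 4) : ℝ) : ℂ) * (f ((((1 + t ^ 2) ^ (-(1/2) : ℝ)) • x) + h • (((1 + t ^ 2) ^ (-(1/2) : ℝ)) • EuclideanSpace.single i (1 : ℝ))) * Complex.exp (Complex.I * (((‖x‖ ^ 2 + (2 * x i * h + h ^ 2) : ℝ)) : ℂ) * (t : ℂ) / (2 * (1 + (t : ℂ) ^ 2))))) := by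
    funext h
    rw [smul_add, smul_comm, norm_expand,
      show ‖x‖ ^ 2 + 2 * x i * h + h ^ 2 = ‖x‖ ^ 2 + (2 * x i * h + h ^ 2) from by ring]
    ring
  rw [hfun]
  have hr : ∀ h : ℝ, HasDerivAt (fun h : ℝ => ‖x‖ ^ 2 + (2 * x i * h + h ^ 2))
      (2 * x i + 2 * h) h := by
    intro h
    have h1 : HasDerivAt (fun h : ℝ => 2 * x i * h) (2 * x i) h := by
      simpa using (hasDerivAt_id h).const_mul (2 * x i)
    have := (h1.add (hasDerivAt_pow 2 h)).const_add (‖x‖ ^ 2)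
    refine this.congr_deriv ?_
    norm_num
  have hEXP : ∀ h : ℝ, HasDerivAt (fun h : ℝ => Complex.exp (Complex.I * (((‖x‖ ^ 2 + (2 * x i * h + h ^ 2) : ℝ)) : ℂ) * (t : ℂ) / (2 * (1 + (t : ℂ) ^ 2))))
      (Complex.exp (Complex.I * (((‖x‖ ^ 2 + (2 * x i * h + h ^ 2) : ℝ)) : ℂ) * (t : ℂ) / (2 * (1 + (t : ℂ) ^ 2))) * (Complex.I * ((2 * x i + 2 * h : ℝ) : ℂ) * (t : ℂ) / (2 * (1 + (t : ℂ) ^ 2)))) h := fun h =>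
    ((((hr h).ofReal_comp.const_mul Complex.I).mul_const ((t : ℝ) : ℂ)).div_const (2 * (1 + (t : ℂ) ^ 2))).cexp
  have hg : ∀ h : ℝ, HasDerivAt (fun h : ℝ => f ((((1 + t ^ 2) ^ (-(1/2) : ℝ)) • x) + h • (((1 + t ^ 2) ^ (-(1/2) : ℝ)) • EuclideanSpace.single i (1 : ℝ))))
      (fderiv ℝ f ((((1 + t ^ 2) ^ (-(1/2) : ℝ)) • x) + h • (((1 + t ^ 2) ^ (-(1/2) : ℝ)) • EuclideanSpace.single i (1 : ℝ))) (((1 + t ^ 2) ^ (-(1/2) : ℝ)) • EuclideanSpace.single i (1 : ℝ))) h := fun h => line_hasDerivAt hdf (((1 + t ^ 2) ^ (-(1/2) : ℝ)) • x) (((1 + t ^ 2) ^ (-(1/2) : ℝ)) • EuclideanSpace.single i (1 : ℝ)) h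
  have hd1 : deriv (fun h : ℝ => (((1 + t ^ 2) ^ (-(d : ℝ) / 4) : ℝ) : ℂ) * (f ((((1 + t ^ 2) ^ (-(1/2) : ℝ)) • x) + h • (((1 + t ^ 2) ^ (-(1/2) : ℝ)) • EuclideanSpace.single i (1 : ℝ))) * Complex.exp (Complex.I * (((‖x‖ ^ 2 + (2 * x i * h + h ^ 2) : ℝ)) : ℂ) * (t : ℂ) / (2 * (1 + (t : ℂ) ^ 2)))))
      = fun h : ℝ => (((1 + t ^ 2) ^ (-(d : ℝ) / 4) : ℝ) : ℂ) * (fderiv ℝ f ((((1 + t ^ 2) ^ (-(1/2) : ℝ)) • x) + h • (((1 + t ^ 2) ^ (-(1/2) : ℝ)) • EuclideanSpace.single i (1 : ℝ))) (((1 + t ^ 2) ^ (-(1/2) : ℝ)) • EuclideanSpace.single i (1 : ℝ)) * Complex.exp (Complex.I * (((‖x‖ ^ 2 + (2 * x i * h + h ^ 2) : ℝ)) : ℂ) * (t : ℂ) / (2 * (1 + (t : ℂ) ^ 2)))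
        + f ((((1 + t ^ 2) ^ (-(1/2) : ℝ)) • x) + h • (((1 + t ^ 2) ^ (-(1/2) : ℝ)) • EuclideanSpace.single i (1 : ℝ))) *
          (Complex.exp (Complex.I * (((‖x‖ ^ 2 + (2 * x i * h + h ^ 2) : ℝ)) : ℂ) * (t : ℂ) / (2 * (1 + (t : ℂ) ^ 2))) * (Complex.I * ((2 * x i + 2 * h : ℝ) : ℂ) * (t : ℂ) / (2 * (1 + (t : ℂ) ^ 2))))) :=
    funext fun h => (((hg h).mul (hEXP h)).const_mul (((1 + t ^ 2) ^ (-(d : ℝ) / 4) : ℝ) : ℂ)).deriv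
  rw [hd1]
  have ha : HasDerivAt (fun h : ℝ => fderiv ℝ f ((((1 + t ^ 2) ^ (-(1/2) : ℝ)) • x) + h • (((1 + t ^ 2) ^ (-(1/2) : ℝ)) • EuclideanSpace.single i (1 : ℝ))) (((1 + t ^ 2) ^ (-(1/2) : ℝ)) • EuclideanSpace.single i (1 : ℝ)))
      (fderiv ℝ (fderiv ℝ f) (((1 + t ^ 2) ^ (-(1/2) : ℝ)) • x) (((1 + t ^ 2) ^ (-(1/2) : ℝ)) • EuclideanSpace.single i (1 : ℝ)) (((1 + t ^ 2) ^ (-(1/2) : ℝ)) • EuclideanSpace.single i (1 : ℝ))) 0 := line2_hasDerivAt hf (((1 + t ^ 2) ^ (-(1/2) : ℝ)) • x) (((1 + t ^ 2) ^ (-(1/2) : ℝ)) • EuclideanSpace.single i (1 : ℝ))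
  have hr2 : HasDerivAt (fun h : ℝ => 2 * x i + 2 * h) (2 : ℝ) 0 := by
    have := ((hasDerivAt_id (0:ℝ)).const_mul (2:ℝ)).const_add (2 * x i)
    exact this.congr_deriv (by ring)
  have hq2 : HasDerivAt (fun h : ℝ => Complex.I * ((2 * x i + 2 * h : ℝ) : ℂ) * (t : ℂ) / (2 * (1 + (t : ℂ) ^ 2)))
      (Complex.I * (((2:ℝ)) : ℂ) * (t : ℂ) / (2 * (1 + (t : ℂ) ^ 2))) 0 :=
    ((hr2.ofReal_comp.const_mul Complex.I).mul_const ((t : ℝ) : ℂ)).div_const (2 * (1 + (t : ℂ) ^ 2))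
  have htot := ((ha.mul (hEXP 0)).add ((hg 0).mul ((hEXP 0).mul hq2))).const_mul (((1 + t ^ 2) ^ (-(d : ℝ) / 4) : ℝ) : ℂ)
  have htot' := htot.deriv
  simp only [Pi.mul_apply, Pi.add_apply] at htot'
  rw [htot']
  simp only [zero_smul, add_zero, map_smul, ContinuousLinearMap.coe_smul',
    Pi.smul_apply, smul_eq_mul, Complex.real_smul, mul_zero, ne_eq, OfNat.ofNat_ne_zero,
    not_false_eq_true, zero_pow]
  push_cast
  ring


lemma sum_coord_fderiv {d : ℕ} (g : EuclideanSpace ℝ (Fin d) → ℂ)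
    (y : EuclideanSpace ℝ (Fin d)) (x : EuclideanSpace ℝ (Fin d)) :
    ∑ i : Fin d, ((x i : ℝ) : ℂ) * fderiv ℝ g y (EuclideanSpace.single i (1:ℝ))
      = fderiv ℝ g y x := by
  have h1 : fderiv ℝ g y x = fderiv ℝ g y (∑ i : Fin d, x i • EuclideanSpace.single i (1:ℝ)) := by
    rw [← eucl_sum]
  rw [h1, map_sum]
  refine (Finset.sum_congr rfl fun i _ => ?_).symm
  rw [map_smul]
  exact Complex.real_smul

lemma norm_sq_coords {d : ℕ} (x : EuclideanSpace ℝ (Fin d)) :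
    ‖x‖ ^ 2 = ∑ i : Fin d, x i ^ 2 := by
  rw [EuclideanSpace.norm_eq, Real.sq_sqrt (by positivity)]
  simp [Real.norm_eq_abs, sq_abs]

/-- Coordinatewise Laplacian of a function on `ℝ^d`: the sum of the second derivatives along
the coordinate directions. -/
noncomputable def coordLaplacian {d : ℕ} (f : EuclideanSpace ℝ (Fin d) → ℂ)
    (x : EuclideanSpace ℝ (Fin d)) : ℂ :=
  ∑ i : Fin d, deriv (deriv (fun h : ℝ => f (x + h • EuclideanSpace.single i (1 : ℝ)))) 0

lemma coordLaplacian_eq {d : ℕ} {f : EuclideanSpace ℝ (Fin d) → ℂ}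
    (hf : ContDiff ℝ 2 f) (y : EuclideanSpace ℝ (Fin d)) :
    coordLaplacian f y = ∑ i : Fin d,
        fderiv ℝ (fderiv ℝ f) y (EuclideanSpace.single i 1) (EuclideanSpace.single i 1) := by
  simp only [coordLaplacian]
  exact coordLaplacian_eq' hf y

set_option maxHeartbeats 1000000 in
/-- Lens transform (formula (5.1)): it maps solutions of the linear Schrödinger equation with
harmonic potential to solutions of the free linear Schrödinger equation. -/
theorem stmt_10 (d : ℕ) (hd : 1 ≤ d) (T : ℝ) (hT0 : 0 < T) (hT1 : T ≤ 1)
    (v : ℝ → EuclideanSpace ℝ (Fin d) → ℂ)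
    (hv1 : ContDiff ℝ 1 (fun p : ℝ × EuclideanSpace ℝ (Fin d) => v p.1 p.2))
    (hv2 : ∀ s : ℝ, ContDiff ℝ 2 (v s))
    (hveq : ∀ s ∈ Set.Icc (0 : ℝ) (Real.arctan T), ∀ y : EuclideanSpace ℝ (Fin d),
      Complex.I * deriv (fun s' => v s' y) s + (1 / 2 : ℂ) * coordLaplacian (v s) y
        - (1 / 2 : ℂ) * ((‖y‖ ^ 2 : ℝ) : ℂ) * v s y = 0)
    (u : ℝ → EuclideanSpace ℝ (Fin d) → ℂ)
    (hu : ∀ t x, u t x =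
      (((1 + t ^ 2) ^ (-(d : ℝ) / 4) : ℝ) : ℂ) *
        v (Real.arctan t) ((Real.sqrt (1 + t ^ 2))⁻¹ • x) *
        Complex.exp (Complex.I * ((‖x‖ ^ 2 : ℝ) : ℂ) * (t : ℂ) / (2 * (1 + (t : ℂ) ^ 2)))) :
    (∀ t ∈ Set.Icc (0 : ℝ) T, ∀ x : EuclideanSpace ℝ (Fin d),
      Complex.I * deriv (fun t' => u t' x) t + (1 / 2 : ℂ) * coordLaplacian (u t) x = 0) ∧
    (∀ x, u 0 x = v 0 x) := by
  constructor
  · intro t ht x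
    have hc : (0:ℝ) < 1 + t ^ 2 := by positivity
    have hsq : ∀ r : ℝ, (Real.sqrt (1 + r ^ 2))⁻¹ = (1 + r ^ 2) ^ (-(1/2) : ℝ) := by
      intro r
      have h0 : (0:ℝ) ≤ 1 + r ^ 2 := by positivity
      rw [Real.sqrt_eq_rpow, ← Real.rpow_neg h0]
      try norm_num
    have hCc : (1 + (t : ℂ) ^ 2) = (((1 + t ^ 2 : ℝ)) : ℂ) := by push_cast; ring
    have hCne : (1 + (t : ℂ) ^ 2) ≠ 0 := by
      rw [hCc]; exact_mod_cast hc.ne'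
    -- time derivative
    have hufun : (fun t' => u t' x) = (fun t' : ℝ =>
        (((1 + t' ^ 2) ^ (-(d : ℝ) / 4) : ℝ) : ℂ) *
          v (Real.arctan t') (((1 + t' ^ 2) ^ (-(1/2) : ℝ)) • x) *
          Complex.exp (Complex.I * ((‖x‖ ^ 2 : ℝ) : ℂ) * (t' : ℂ) / (2 * (1 + (t' : ℂ) ^ 2)))) :=
      funext fun t' => by rw [hu t' x, hsq t']
    have hdt : deriv (fun t' => u t' x) t
        = ((((-(d : ℝ) / 4) * (1 + t ^ 2) ^ (-(d : ℝ) / 4 - 1) * (2 * t) : ℝ)) : ℂ) * v (Real.arctan t) (((1 + t ^ 2) ^ (-(1/2) : ℝ)) • x) * (Complex.exp (Complex.I * ((‖x‖ ^ 2 : ℝ) : ℂ) * (t : ℂ) / (2 * (1 + (t : ℂ) ^ 2))))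
          + ((((1 + t ^ 2) ^ (-(d : ℝ) / 4) : ℝ)) : ℂ) * ((fderiv ℝ (fun p : ℝ × EuclideanSpace ℝ (Fin d) => v p.1 p.2) ((Real.arctan t), (((1 + t ^ 2) ^ (-(1/2) : ℝ)) • x)))
              (1 / (1 + t ^ 2), ((-(1/2) : ℝ) * (1 + t ^ 2) ^ (-(1/2) - 1 : ℝ) * (2 * t)) • x)) * (Complex.exp (Complex.I * ((‖x‖ ^ 2 : ℝ) : ℂ) * (t : ℂ) / (2 * (1 + (t : ℂ) ^ 2))))
          + ((((1 + t ^ 2) ^ (-(d : ℝ) / 4) : ℝ)) : ℂ) * v (Real.arctan t) (((1 + t ^ 2) ^ (-(1/2) : ℝ)) • x) * (Complex.exp (Complex.I * ((‖x‖ ^ 2 : ℝ) : ℂ) * (t : ℂ) / (2 * (1 + (t : ℂ) ^ 2)))) *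
            (Complex.I * ((‖x‖ ^ 2 : ℝ) : ℂ) * (1 - (t : ℂ) ^ 2) / (2 * (1 + (t : ℂ) ^ 2) ^ 2)) := by
      rw [hufun]
      exact (time_deriv_aux v hv1 t x).deriv
    -- decompose the full derivative of v
    have hF : HasFDerivAt (fun p : ℝ × EuclideanSpace ℝ (Fin d) => v p.1 p.2) (fderiv ℝ (fun p : ℝ × EuclideanSpace ℝ (Fin d) => v p.1 p.2) ((Real.arctan t), (((1 + t ^ 2) ^ (-(1/2) : ℝ)) • x))) ((Real.arctan t), (((1 + t ^ 2) ^ (-(1/2) : ℝ)) • x)) := (hv1.differentiable (by norm_num) _).hasFDerivAt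
    have hVs : (fderiv ℝ (fun p : ℝ × EuclideanSpace ℝ (Fin d) => v p.1 p.2) ((Real.arctan t), (((1 + t ^ 2) ^ (-(1/2) : ℝ)) • x))) ((1:ℝ), (0 : EuclideanSpace ℝ (Fin d))) = (deriv (fun s' => v s' (((1 + t ^ 2) ^ (-(1/2) : ℝ)) • x)) (Real.arctan t)) := by
      have hcurve : HasDerivAt (fun s' : ℝ => (s', (((1 + t ^ 2) ^ (-(1/2) : ℝ)) • x)))
          ((1:ℝ), (0 : EuclideanSpace ℝ (Fin d))) (Real.arctan t) :=
        (hasDerivAt_id (Real.arctan t)).prodMk (hasDerivAt_const (Real.arctan t) (((1 + t ^ 2) ^ (-(1/2) : ℝ)) • x))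
      exact ((hF.comp_hasDerivAt (Real.arctan t) hcurve).deriv).symm
    have hDx : HasFDerivAt (v (Real.arctan t))
        ((fderiv ℝ (fun p : ℝ × EuclideanSpace ℝ (Fin d) => v p.1 p.2) ((Real.arctan t), (((1 + t ^ 2) ^ (-(1/2) : ℝ)) • x))).comp (ContinuousLinearMap.inr ℝ ℝ (EuclideanSpace ℝ (Fin d)))) (((1 + t ^ 2) ^ (-(1/2) : ℝ)) • x) :=
      hF.comp (((1 + t ^ 2) ^ (-(1/2) : ℝ)) • x) (hasFDerivAt_prodMk_right (Real.arctan t) (((1 + t ^ 2) ^ (-(1/2) : ℝ)) • x))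
    have hD0 : ∀ b, (fderiv ℝ (fun p : ℝ × EuclideanSpace ℝ (Fin d) => v p.1 p.2) ((Real.arctan t), (((1 + t ^ 2) ^ (-(1/2) : ℝ)) • x))) ((0:ℝ), b) = fderiv ℝ (v (Real.arctan t)) (((1 + t ^ 2) ^ (-(1/2) : ℝ)) • x) b := by
      intro b
      rw [hDx.fderiv]
      rfl
    have hsplit : (fderiv ℝ (fun p : ℝ × EuclideanSpace ℝ (Fin d) => v p.1 p.2) ((Real.arctan t), (((1 + t ^ 2) ^ (-(1/2) : ℝ)) • x))) (1 / (1 + t ^ 2), ((-(1/2) : ℝ) * (1 + t ^ 2) ^ (-(1/2) - 1 : ℝ) * (2 * t)) • x)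
        = ((1 / (1 + t ^ 2) : ℝ) : ℂ) * (deriv (fun s' => v s' (((1 + t ^ 2) ^ (-(1/2) : ℝ)) • x)) (Real.arctan t)) + ((((-(1/2) : ℝ) * (1 + t ^ 2) ^ (-(1/2) - 1 : ℝ) * (2 * t)) : ℝ) : ℂ) * (fderiv ℝ (v (Real.arctan t)) (((1 + t ^ 2) ^ (-(1/2) : ℝ)) • x) x) := by
      have harg : ((1 / (1 + t ^ 2) : ℝ), ((-(1/2) : ℝ) * (1 + t ^ 2) ^ (-(1/2) - 1 : ℝ) * (2 * t)) • x)
          = (1 / (1 + t ^ 2) : ℝ) • (((1:ℝ), (0 : EuclideanSpace ℝ (Fin d))))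
            + ((-(1/2) : ℝ) * (1 + t ^ 2) ^ (-(1/2) - 1 : ℝ) * (2 * t)) • (((0:ℝ), x)) := by
        simp [Prod.ext_iff]
      rw [harg, map_add, map_smul, map_smul, hVs, hD0 x, Complex.real_smul, Complex.real_smul]
    -- Laplacian
    have hulap : coordLaplacian (u t) x = ∑ i : Fin d, (((((1 + t ^ 2) ^ (-(d : ℝ) / 4) : ℝ)) : ℂ) *
        Complex.exp (Complex.I * ((‖x‖ ^ 2 : ℝ) : ℂ) * (t : ℂ) / (2 * (1 + (t : ℂ) ^ 2))) *
      ( ((((1 + t ^ 2) ^ (-(1/2) : ℝ)) * ((1 + t ^ 2) ^ (-(1/2) : ℝ)) : ℝ) : ℂ) * (fderiv ℝ (fderiv ℝ (v (Real.arctan t))) (((1 + t ^ 2) ^ (-(1/2) : ℝ)) • x) (EuclideanSpace.single i (1 : ℝ)) (EuclideanSpace.single i (1 : ℝ)))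
        + 2 * (Complex.I * ((2 * x i : ℝ) : ℂ) * (t : ℂ) / (2 * (1 + (t : ℂ) ^ 2))) * ((((1 + t ^ 2) ^ (-(1/2) : ℝ)) : ℝ) : ℂ) * (fderiv ℝ (v (Real.arctan t)) (((1 + t ^ 2) ^ (-(1/2) : ℝ)) • x) (EuclideanSpace.single i (1 : ℝ)))
        + v (Real.arctan t) (((1 + t ^ 2) ^ (-(1/2) : ℝ)) • x) * ( (Complex.I * (((2:ℝ)) : ℂ) * (t : ℂ) / (2 * (1 + (t : ℂ) ^ 2))) + (Complex.I * ((2 * x i : ℝ) : ℂ) * (t : ℂ) / (2 * (1 + (t : ℂ) ^ 2))) ^ 2 ) )) := by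
      simp only [coordLaplacian]
      refine Finset.sum_congr rfl fun i _ => ?_
      have hfi : (fun h : ℝ => u t (x + h • (EuclideanSpace.single i (1 : ℝ))))
          = (fun h : ℝ => ((((1 + t ^ 2) ^ (-(d : ℝ) / 4) : ℝ)) : ℂ) * v (Real.arctan t) (((1 + t ^ 2) ^ (-(1/2) : ℝ)) • (x + h • (EuclideanSpace.single i (1 : ℝ)))) *
              Complex.exp (Complex.I * ((‖x + h • (EuclideanSpace.single i (1 : ℝ))‖ ^ 2 : ℝ) : ℂ) * (t : ℂ) / (2 * (1 + (t : ℂ) ^ 2)))) :=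
        funext fun h => by rw [hu t (x + h • (EuclideanSpace.single i (1 : ℝ))), hsq t]
      rw [hfi]
      exact lap_term t x (v (Real.arctan t)) (hv2 _) i
    -- real power identities
    have hbb : ((1 + t ^ 2) ^ (-(1/2) : ℝ)) * ((1 + t ^ 2) ^ (-(1/2) : ℝ)) = (1 + t ^ 2)⁻¹ := by
      rw [← Real.rpow_add hc]
      norm_num [Real.rpow_neg_one]
    have hApr : (((-(d : ℝ) / 4) * (1 + t ^ 2) ^ (-(d : ℝ) / 4 - 1) * (2 * t) : ℝ)) = -((d:ℝ) * t / 2) * ((1 + t ^ 2) ^ (-(d : ℝ) / 4)) * (1 + t ^ 2)⁻¹ := by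
      rw [show (-(d : ℝ) / 4 - 1 : ℝ) = -(d : ℝ) / 4 - 1 from rfl, Real.rpow_sub hc,
        Real.rpow_one]
      field_simp
      try ring
    have hBpr : ((-(1/2) : ℝ) * (1 + t ^ 2) ^ (-(1/2) - 1 : ℝ) * (2 * t)) = -t * ((1 + t ^ 2) ^ (-(1/2) : ℝ)) * (1 + t ^ 2)⁻¹ := by
      rw [Real.rpow_sub hc, Real.rpow_one]
      field_simp
      try ring
    have hyn : (‖(((1 + t ^ 2) ^ (-(1/2) : ℝ)) • x : EuclideanSpace ℝ (Fin d))‖ ^ 2 : ℝ)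
        = (((1 + t ^ 2) ^ (-(1/2) : ℝ)) * ((1 + t ^ 2) ^ (-(1/2) : ℝ))) * ‖x‖ ^ 2 := by
      rw [norm_smul, mul_pow, Real.norm_eq_abs, sq_abs]
      ring
    -- the PDE at (arctan t, y)
    have hs_mem : (Real.arctan t) ∈ Set.Icc (0:ℝ) (Real.arctan T) := by
      constructor
      · rw [← Real.arctan_zero]
        exact Real.arctan_strictMono.monotone ht.1
      · exact Real.arctan_strictMono.monotone ht.2
    have hpde := hveq (Real.arctan t) hs_mem (((1 + t ^ 2) ^ (-(1/2) : ℝ)) • x)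
    rw [hyn, hbb] at hpde
    -- closed form of the Laplacian sum
    have hclose : (∑ i : Fin d, (((((1 + t ^ 2) ^ (-(d : ℝ) / 4) : ℝ)) : ℂ) *
        Complex.exp (Complex.I * ((‖x‖ ^ 2 : ℝ) : ℂ) * (t : ℂ) / (2 * (1 + (t : ℂ) ^ 2))) *
      ( ((((1 + t ^ 2) ^ (-(1/2) : ℝ)) * ((1 + t ^ 2) ^ (-(1/2) : ℝ)) : ℝ) : ℂ) * (fderiv ℝ (fderiv ℝ (v (Real.arctan t))) (((1 + t ^ 2) ^ (-(1/2) : ℝ)) • x) (EuclideanSpace.single i (1 : ℝ)) (EuclideanSpace.single i (1 : ℝ)))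
        + 2 * (Complex.I * ((2 * x i : ℝ) : ℂ) * (t : ℂ) / (2 * (1 + (t : ℂ) ^ 2))) * ((((1 + t ^ 2) ^ (-(1/2) : ℝ)) : ℝ) : ℂ) * (fderiv ℝ (v (Real.arctan t)) (((1 + t ^ 2) ^ (-(1/2) : ℝ)) • x) (EuclideanSpace.single i (1 : ℝ)))
        + v (Real.arctan t) (((1 + t ^ 2) ^ (-(1/2) : ℝ)) • x) * ( (Complex.I * (((2:ℝ)) : ℂ) * (t : ℂ) / (2 * (1 + (t : ℂ) ^ 2))) + (Complex.I * ((2 * x i : ℝ) : ℂ) * (t : ℂ) / (2 * (1 + (t : ℂ) ^ 2))) ^ 2 ) )))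
        = ((((1 + t ^ 2) ^ (-(d : ℝ) / 4) : ℝ)) : ℂ) * (Complex.exp (Complex.I * ((‖x‖ ^ 2 : ℝ) : ℂ) * (t : ℂ) / (2 * (1 + (t : ℂ) ^ 2)))) * ( (((1 + t ^ 2)⁻¹ : ℝ) : ℂ) * (coordLaplacian (v (Real.arctan t)) (((1 + t ^ 2) ^ (-(1/2) : ℝ)) • x))
            + (4 * Complex.I * (t:ℂ) / (2 * (1 + (t : ℂ) ^ 2))) * ((((1 + t ^ 2) ^ (-(1/2) : ℝ)) : ℝ) : ℂ) * (fderiv ℝ (v (Real.arctan t)) (((1 + t ^ 2) ^ (-(1/2) : ℝ)) • x) x)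
            + v (Real.arctan t) (((1 + t ^ 2) ^ (-(1/2) : ℝ)) • x) * ( (d : ℂ) * (Complex.I * (((2:ℝ)) : ℂ) * (t : ℂ) / (2 * (1 + (t : ℂ) ^ 2))) + (Complex.I * (((2:ℝ)) : ℂ) * (t : ℂ) / (2 * (1 + (t : ℂ) ^ 2))) ^ 2 * ((‖x‖ ^ 2 : ℝ) : ℂ) ) ) := by
      have hterm : ∀ i : Fin d, (((((1 + t ^ 2) ^ (-(d : ℝ) / 4) : ℝ)) : ℂ) *
        Complex.exp (Complex.I * ((‖x‖ ^ 2 : ℝ) : ℂ) * (t : ℂ) / (2 * (1 + (t : ℂ) ^ 2))) *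
      ( ((((1 + t ^ 2) ^ (-(1/2) : ℝ)) * ((1 + t ^ 2) ^ (-(1/2) : ℝ)) : ℝ) : ℂ) * (fderiv ℝ (fderiv ℝ (v (Real.arctan t))) (((1 + t ^ 2) ^ (-(1/2) : ℝ)) • x) (EuclideanSpace.single i (1 : ℝ)) (EuclideanSpace.single i (1 : ℝ)))
        + 2 * (Complex.I * ((2 * x i : ℝ) : ℂ) * (t : ℂ) / (2 * (1 + (t : ℂ) ^ 2))) * ((((1 + t ^ 2) ^ (-(1/2) : ℝ)) : ℝ) : ℂ) * (fderiv ℝ (v (Real.arctan t)) (((1 + t ^ 2) ^ (-(1/2) : ℝ)) • x) (EuclideanSpace.single i (1 : ℝ)))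
        + v (Real.arctan t) (((1 + t ^ 2) ^ (-(1/2) : ℝ)) • x) * ( (Complex.I * (((2:ℝ)) : ℂ) * (t : ℂ) / (2 * (1 + (t : ℂ) ^ 2))) + (Complex.I * ((2 * x i : ℝ) : ℂ) * (t : ℂ) / (2 * (1 + (t : ℂ) ^ 2))) ^ 2 ) ))
          = (((((1 + t ^ 2) ^ (-(d : ℝ) / 4) : ℝ)) : ℂ) * (Complex.exp (Complex.I * ((‖x‖ ^ 2 : ℝ) : ℂ) * (t : ℂ) / (2 * (1 + (t : ℂ) ^ 2)))) * (((1 + t ^ 2)⁻¹ : ℝ) : ℂ)) * (fderiv ℝ (fderiv ℝ (v (Real.arctan t))) (((1 + t ^ 2) ^ (-(1/2) : ℝ)) • x) (EuclideanSpace.single i (1 : ℝ)) (EuclideanSpace.single i (1 : ℝ)))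
            + (((((1 + t ^ 2) ^ (-(d : ℝ) / 4) : ℝ)) : ℂ) * (Complex.exp (Complex.I * ((‖x‖ ^ 2 : ℝ) : ℂ) * (t : ℂ) / (2 * (1 + (t : ℂ) ^ 2)))) * (4 * Complex.I * (t:ℂ) / (2 * (1 + (t : ℂ) ^ 2))) * ((((1 + t ^ 2) ^ (-(1/2) : ℝ)) : ℝ) : ℂ))
                * (((x i : ℝ) : ℂ) * (fderiv ℝ (v (Real.arctan t)) (((1 + t ^ 2) ^ (-(1/2) : ℝ)) • x) (EuclideanSpace.single i (1 : ℝ))))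
            + (((((1 + t ^ 2) ^ (-(d : ℝ) / 4) : ℝ)) : ℂ) * (Complex.exp (Complex.I * ((‖x‖ ^ 2 : ℝ) : ℂ) * (t : ℂ) / (2 * (1 + (t : ℂ) ^ 2)))) * v (Real.arctan t) (((1 + t ^ 2) ^ (-(1/2) : ℝ)) • x) * (Complex.I * (((2:ℝ)) : ℂ) * (t : ℂ) / (2 * (1 + (t : ℂ) ^ 2)))
              + (((((1 + t ^ 2) ^ (-(d : ℝ) / 4) : ℝ)) : ℂ) * (Complex.exp (Complex.I * ((‖x‖ ^ 2 : ℝ) : ℂ) * (t : ℂ) / (2 * (1 + (t : ℂ) ^ 2)))) * v (Real.arctan t) (((1 + t ^ 2) ^ (-(1/2) : ℝ)) • x) * ((Complex.I * (((2:ℝ)) : ℂ) * (t : ℂ) / (2 * (1 + (t : ℂ) ^ 2))) ^ 2)) * ((x i : ℝ) : ℂ) ^ 2) := by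
        intro i
        rw [hbb]
        push_cast
        ring
      rw [Finset.sum_congr rfl (fun i _ => hterm i)]
      rw [Finset.sum_add_distrib, Finset.sum_add_distrib, ← Finset.mul_sum, ← Finset.mul_sum,
        Finset.sum_add_distrib, Finset.sum_const, ← Finset.mul_sum,
        sum_coord_fderiv (v (Real.arctan t)) (((1 + t ^ 2) ^ (-(1/2) : ℝ)) • x) x, Finset.card_univ, Fintype.card_fin, nsmul_eq_mul]
      rw [coordLaplacian_eq (hv2 (Real.arctan t)) (((1 + t ^ 2) ^ (-(1/2) : ℝ)) • x)]
      have hxn : (∑ i : Fin d, ((x i : ℝ) : ℂ) ^ 2) = ((‖x‖ ^ 2 : ℝ) : ℂ) := by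
        rw [norm_sq_coords]
        push_cast
        ring
      rw [hxn]
      push_cast
      ring
    -- assemble everything
    rw [hdt, hulap, hclose, hsplit, hApr, hBpr]
    push_cast at hpde ⊢
    set aa : ℂ := (((1 + t ^ 2) ^ (-(d : ℝ) / 4) : ℝ) : ℂ) with haa
    set bb : ℂ := (((1 + t ^ 2) ^ (-(1/2) : ℝ) : ℝ) : ℂ) with hbbc
    set EEx : ℂ := Complex.exp (Complex.I * (‖x‖ : ℂ) ^ 2 * (t : ℂ) / (2 * (1 + (t : ℂ) ^ 2)))
      with hEE
    set VV : ℂ := v (Real.arctan t) (((1 + t ^ 2) ^ (-(1/2) : ℝ)) • x) with hVV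
    set LL : ℂ := (coordLaplacian (v (Real.arctan t)) (((1 + t ^ 2) ^ (-(1/2) : ℝ)) • x)) with hLL
    set RR : ℂ := (fderiv ℝ (v (Real.arctan t)) (((1 + t ^ 2) ^ (-(1/2) : ℝ)) • x) x) with hRR
    set DS : ℂ := (deriv (fun s' => v s' (((1 + t ^ 2) ^ (-(1/2) : ℝ)) • x)) (Real.arctan t)) with hDS
    field_simp [hCne] at hpde ⊢
    have hD : (2 * ((1 + (t:ℂ) ^ 2) * (2 * (1 + (t:ℂ) ^ 2)) *
        (2 * (1 + (t:ℂ) ^ 2) * (2 * (1 + (t:ℂ) ^ 2)) ^ 2))) ≠ 0 := by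
      simp [hCne]
    linear_combination (2 * aa * EEx) * hpde + (2 * aa * EEx * VV * (‖x‖ : ℂ)^2) * Complex.I_sq
  · intro x
    rw [hu 0 x]
    norm_num [Real.arctan_zero, Real.sqrt_one, Real.one_rpow]
end
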